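/- For any a ∈ R and ε > 0, the derivative of the scaled Huber loss f_ε at a equals the partial derivative in x of the majorizer g_ε(x; a) evaluated at x = a; explicitly, both equal a/ε when |a| ≤ ε and sign(a) when |a| > ε. Consequently, for any data (x_i, y_i)_{i=1}^n and any model w⁰, ∇℘_ε(w⁰; w⁰) = n·∇ℓ_ε(w⁰), where ℓ_ε(w) = (1/n)Σ_i f_ε(⟨w, x_i⟩ − y_i) and ℘_ε(w; w⁰) = Σ_i g_ε(⟨w, x_i⟩ − y_i; ⟨w⁰, x_i⟩ − y_i). -/

import Mathlib

open MeasureTheory ProbabilityTheory Matrix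

/-- Euclidean norm of a vector in `Fin k → ℝ`. -/
noncomputable def euclNorm {k : ℕ} (v : Fin k → ℝ) : ℝ := Real.sqrt (∑ j, v j ^ 2)

/-- The `M`-truncated IRLS weight for a residual `r`, i.e. `min (1/|r|) M`,
interpreted as `M` when the residual is zero. -/
noncomputable def trWeight (M r : ℝ) : ℝ := if r = 0 then M else min (1 / |r|) M

/-- Smallest eigenvalue of a symmetric matrix, via the Rayleigh quotient. -/
noncomputable def lamMin {k : ℕ} (A : Matrix (Fin k) (Fin k) ℝ) : ℝ :=
  sInf {r : ℝ | ∃ v : Fin k → ℝ, euclNorm v = 1 ∧ r = v ⬝ᵥ A.mulVec v}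

/-- Largest eigenvalue of a symmetric matrix, via the Rayleigh quotient. -/
noncomputable def lamMax {k : ℕ} (A : Matrix (Fin k) (Fin k) ℝ) : ℝ :=
  sSup {r : ℝ | ∃ v : Fin k → ℝ, euclNorm v = 1 ∧ r = v ⬝ᵥ A.mulVec v}

/-- Operator (spectral) norm of a `d × n` real matrix. -/
noncomputable def opNorm2 {d n : ℕ} (X : Matrix (Fin d) (Fin n) ℝ) : ℝ :=
  Real.sqrt (lamMax (X * Xᵀ))

/-- Covariate matrix whose `i`-th column is the sample point `s i`. -/
def Xmat {d n : ℕ} (s : Fin n → Fin d → ℝ) : Matrix (Fin d) (Fin n) ℝ :=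
  Matrix.of fun j i => s i j

/-- `X_G`: the matrix agreeing with `X` on columns in `G` and zero elsewhere. -/
def restrictCols {d n : ℕ} (X : Matrix (Fin d) (Fin n) ℝ) (G : Finset (Fin n)) :
    Matrix (Fin d) (Fin n) ℝ :=
  Matrix.of fun j i => if i ∈ G then X j i else 0

/-- The `M`-truncated weights assigned by model `w` on data `(X, y)`. -/
noncomputable def stirWeights {d n : ℕ} (X : Matrix (Fin d) (Fin n) ℝ) (y : Fin n → ℝ)
    (M : ℝ) (w : Fin d → ℝ) : Fin n → ℝ :=
  fun i => trWeight M ((Xᵀ.mulVec w - y) i)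

/-- One step of (M-truncated) IRLS: weighted least squares with the current weights. -/
noncomputable def stirStep {d n : ℕ} (X : Matrix (Fin d) (Fin n) ℝ) (y : Fin n → ℝ)
    (M : ℝ) (w : Fin d → ℝ) : Fin d → ℝ :=
  (X * Matrix.diagonal (stirWeights X y M w) * Xᵀ)⁻¹.mulVec
    (X.mulVec fun i => stirWeights X y M w i * y i)

/-- One step of STIR-GD with step length `C`: `w - (2C/(Mn)) • X S r`. -/
noncomputable def stirGDStep {d n : ℕ} (X : Matrix (Fin d) (Fin n) ℝ) (y : Fin n → ℝ)
    (C M : ℝ) (w : Fin d → ℝ) : Fin d → ℝ :=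
  w - (2 * C / (M * n)) • X.mulVec (fun i => stirWeights X y M w i * (Xᵀ.mulVec w - y) i)

/-- An execution trace of a stagewise truncated algorithm (STIR / STIR-GD):
`wStage T` is the model at the start of stage `T`, within stage `T` the truncation
level is `η^T * M₁`, the inner loop applies `step`, and the stage ends the first time
successive iterates are within `2/(η * (η^T * M₁))` of each other. -/
def IsSTIRTrace {d : ℕ} (step : ℝ → (Fin d → ℝ) → (Fin d → ℝ))
    (M₁ η : ℝ) (w0 : Fin d → ℝ) (wStage : ℕ → Fin d → ℝ) (stageLen : ℕ → ℕ) : Prop :=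
  wStage 0 = w0 ∧
  ∃ wIter : ℕ → ℕ → Fin d → ℝ,
    (∀ T, wIter T 0 = wStage T) ∧
    (∀ T t, wIter T (t + 1) = step (η ^ T * M₁) (wIter T t)) ∧
    (∀ T, euclNorm (wIter T (stageLen T + 1) - wIter T (stageLen T)) ≤
      2 / (η * (η ^ T * M₁))) ∧
    (∀ T t, t < stageLen T →
      2 / (η * (η ^ T * M₁)) < euclNorm (wIter T (t + 1) - wIter T t)) ∧
    (∀ T, wStage (T + 1) = wIter T (stageLen T + 1))

/-- A real random variable `Z` is `R`-sub-Gaussian (ψ₂-norm at most `R`). -/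
def IsSubGaussianRV {Ω : Type*} [MeasurableSpace Ω] (μ : Measure Ω) (Z : Ω → ℝ) (R : ℝ) : Prop :=
  ∀ p : ℝ, 1 ≤ p → (∫ ω, |Z ω| ^ p ∂μ) ^ (1 / p) ≤ R * Real.sqrt p

/-- A distribution on `ℝ^d` is `R`-sub-Gaussian if all its one-dimensional marginals are. -/
def IsSubGaussianVec {d : ℕ} (D : Measure (Fin d → ℝ)) (R : ℝ) : Prop :=
  ∀ v : Fin d → ℝ, euclNorm v = 1 → IsSubGaussianRV D (fun x => v ⬝ᵥ x) R

/-- A distribution on `ℝ^d` is isotropic if `E ⟨v, x⟩² = 1` for every unit `v`. -/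
def IsIsotropic {d : ℕ} (D : Measure (Fin d → ℝ)) : Prop :=
  ∀ v : Fin d → ℝ, euclNorm v = 1 → ∫ x, (v ⬝ᵥ x) ^ 2 ∂D = 1

/-- The weighted strong convexity constant
`c = inf_{u,v unit} E_{x~D} [ min(1/|⟨u,x⟩|, 1) ⟨x,v⟩² ]`. -/
noncomputable def cWSC {d : ℕ} (D : Measure (Fin d → ℝ)) : ℝ :=
  ⨅ p : {q : (Fin d → ℝ) × (Fin d → ℝ) // euclNorm q.1 = 1 ∧ euclNorm q.2 = 1},
    ∫ x, trWeight 1 (p.1.1 ⬝ᵥ x) * (p.1.2 ⬝ᵥ x) ^ 2 ∂D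

/-- The weighted strong convexity constant in the presence of dense noise:
`c_ε = inf_{0 ≤ r ≤ 1/M, u,v unit} E [ min(1/|Mr⟨u,x⟩ - Mε|, 1) ⟨x,v⟩² ]`. -/
noncomputable def cWSCnoise {d : ℕ} (D : Measure (Fin d → ℝ)) (Dε : Measure ℝ) [SFinite Dε]
    (M : ℝ) : ℝ :=
  ⨅ p : {q : ℝ × (Fin d → ℝ) × (Fin d → ℝ) //
      0 ≤ q.1 ∧ q.1 ≤ 1 / M ∧ euclNorm q.2.1 = 1 ∧ euclNorm q.2.2 = 1},
    ∫ z : (Fin d → ℝ) × ℝ,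
      trWeight 1 (M * p.1.1 * (p.1.2.1 ⬝ᵥ z.1) - M * z.2) * (p.1.2.2 ⬝ᵥ z.1) ^ 2 ∂(D.prod Dε)

/-- The weighted Gram matrix `X_G S_G X_Gᵀ` induced by the sample `s`, the clean responses
`y_i = ⟨w*, x_i⟩`, the truncation level `M` and the model `w`. -/
noncomputable def gramG {d n : ℕ} (s : Fin n → Fin d → ℝ) (G : Finset (Fin n))
    (wstar : Fin d → ℝ) (M : ℝ) (w : Fin d → ℝ) : Matrix (Fin d) (Fin d) ℝ :=
  restrictCols (Xmat s) G *
    Matrix.diagonal (fun i => if i ∈ G then trWeight M (s i ⬝ᵥ (w - wstar)) else 0) *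
    (restrictCols (Xmat s) G)ᵀ

/-- The weighted Gram matrix `X_G S_G X_Gᵀ` in the dense-noise setting, where the responses
on good points are `y_i = ⟨w*, x_i⟩ + e_i`. -/
noncomputable def gramGnoisy {d n : ℕ} (s : Fin n → Fin d → ℝ) (e : Fin n → ℝ)
    (G : Finset (Fin n)) (wstar : Fin d → ℝ) (M : ℝ) (w : Fin d → ℝ) :
    Matrix (Fin d) (Fin d) ℝ :=
  restrictCols (Xmat s) G *
    Matrix.diagonal (fun i => if i ∈ G then trWeight M (s i ⬝ᵥ (w - wstar) - e i) else 0) *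
    (restrictCols (Xmat s) G)ᵀ

/-- The scaled Huber loss `f_ε`. -/
noncomputable def huberS (ε x : ℝ) : ℝ := if |x| ≤ ε then (x ^ 2 / ε + ε) / 2 else |x|

/-- The majorizer `g_ε(x; a)` of the scaled Huber loss. -/
noncomputable def huberMaj (ε x a : ℝ) : ℝ := (x ^ 2 / max |a| ε + max |a| ε) / 2

/-- The scaled-Huber objective `ℓ_ε(w) = (1/n) ∑ᵢ f_ε(⟨w, xᵢ⟩ - yᵢ)`. -/
noncomputable def huberObj {d n : ℕ} (X : Matrix (Fin d) (Fin n) ℝ) (y : Fin n → ℝ)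
    (ε : ℝ) (w : Fin d → ℝ) : ℝ :=
  (1 / (n : ℝ)) * ∑ i, huberS ε ((Xᵀ.mulVec w - y) i)

lemma quad_hasDerivAt (ε : ℝ) (a : ℝ) :
    HasDerivAt (fun x : ℝ => (x ^ 2 / ε + ε) / 2) (a / ε) a := by
  have h := (((hasDerivAt_pow 2 a).div_const ε).add_const ε).div_const 2
  refine h.congr_deriv ?_
  norm_num
  ring

lemma huberS_hasDerivAt (ε : ℝ) (hε : 0 < ε) (a : ℝ) :
    HasDerivAt (huberS ε) (if |a| ≤ ε then a / ε else Real.sign a) a := by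
  rcases lt_trichotomy |a| ε with hlt | heq | hgt
  · rw [if_pos hlt.le]
    apply (quad_hasDerivAt ε a).congr_of_eventuallyEq
    have : {x : ℝ | |x| < ε} ∈ nhds a :=
      IsOpen.mem_nhds (isOpen_lt continuous_abs continuous_const) hlt
    filter_upwards [this] with x hx
    simp only [huberS, if_pos hx.le]
  · rw [if_pos heq.le]
    have hval : huberS ε a = |a| := by
      have h2 : a ^ 2 = ε ^ 2 := by rw [← sq_abs, heq]
      simp only [huberS, if_pos heq.le, heq, h2]
      field_simp
      norm_num
    rcases heq ▸ abs_cases a with ⟨h1, _⟩ | ⟨h1, _⟩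
    · -- a = ε > 0
      have ha : a = ε := h1.symm
      have hd : a / ε = 1 := by rw [ha]; exact div_self hε.ne'
      rw [hd]
      have hIic : HasDerivWithinAt (huberS ε) 1 (Set.Iic a) a := by
        have hq : HasDerivWithinAt (fun x : ℝ => (x ^ 2 / ε + ε) / 2) 1 (Set.Iic a) a := by
          have := (quad_hasDerivAt ε a).hasDerivWithinAt (s := Set.Iic a)
          rwa [hd] at this
        apply hq.congr_of_eventuallyEq _ (by simp [huberS, heq.le])
        have hmem : Set.Ioi (-ε) ∈ nhdsWithin a (Set.Iic a) := by
          apply nhdsWithin_le_nhds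
          exact IsOpen.mem_nhds isOpen_Ioi (Set.mem_Ioi.2 (by rw [ha]; linarith))
        filter_upwards [hmem, self_mem_nhdsWithin] with x hx1 hx2
        have : |x| ≤ ε := abs_le.2 ⟨le_of_lt (Set.mem_Ioi.1 hx1), le_trans (Set.mem_Iic.1 hx2) ha.le⟩
        simp [huberS, this]
      have hIci : HasDerivWithinAt (huberS ε) 1 (Set.Ici a) a := by
        have habs : HasDerivWithinAt (fun x : ℝ => |x|) 1 (Set.Ici a) a :=
          (hasDerivAt_abs_pos (by rw [ha]; exact hε)).hasDerivWithinAt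
        apply habs.congr_of_eventuallyEq _ hval
        filter_upwards [self_mem_nhdsWithin] with x hx
        rcases eq_or_lt_of_le (Set.mem_Ici.1 hx) with h | h
        · rw [← h, hval]
        · have : ε < |x| := by rw [abs_of_pos (lt_of_lt_of_le hε (ha ▸ hx))]; exact ha ▸ h
          simp [huberS, not_le.2 this]
      have := hIic.union hIci
      rwa [Set.Iic_union_Ici, hasDerivWithinAt_univ] at this
    · -- a = -ε < 0
      have ha : a = -ε := by linarith
      have hd : a / ε = -1 := by rw [ha]; field_simp
      rw [hd]
      have hIci : HasDerivWithinAt (huberS ε) (-1) (Set.Ici a) a := by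
        have hq : HasDerivWithinAt (fun x : ℝ => (x ^ 2 / ε + ε) / 2) (-1) (Set.Ici a) a := by
          have := (quad_hasDerivAt ε a).hasDerivWithinAt (s := Set.Ici a)
          rwa [hd] at this
        apply hq.congr_of_eventuallyEq _ (by simp [huberS, heq.le])
        have hmem : Set.Iio ε ∈ nhdsWithin a (Set.Ici a) := by
          apply nhdsWithin_le_nhds
          exact IsOpen.mem_nhds isOpen_Iio (Set.mem_Iio.2 (by rw [ha]; linarith))
        filter_upwards [hmem, self_mem_nhdsWithin] with x hx1 hx2
        have : |x| ≤ ε := abs_le.2 ⟨ha ▸ Set.mem_Ici.1 hx2, le_of_lt (Set.mem_Iio.1 hx1)⟩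
        simp [huberS, this]
      have hIic : HasDerivWithinAt (huberS ε) (-1) (Set.Iic a) a := by
        have habs : HasDerivWithinAt (fun x : ℝ => |x|) (-1) (Set.Iic a) a :=
          (hasDerivAt_abs_neg (by rw [ha]; linarith)).hasDerivWithinAt
        apply habs.congr_of_eventuallyEq _ hval
        filter_upwards [self_mem_nhdsWithin] with x hx
        rcases eq_or_lt_of_le (Set.mem_Iic.1 hx) with h | h
        · rw [h, hval]
        · have : ε < |x| := by
            rw [abs_of_neg (by linarith [ha ▸ h] : x < 0)]; linarith [ha ▸ h]
          simp [huberS, not_le.2 this]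
      have := hIic.union hIci
      rwa [Set.Iic_union_Ici, hasDerivWithinAt_univ] at this
  · rw [if_neg (not_le.2 hgt)]
    have ha : a ≠ 0 := by
      intro h; rw [h, abs_zero] at hgt; exact absurd hgt (not_lt.2 hε.le)
    have habs : HasDerivAt (fun x : ℝ => |x|) (Real.sign a) a := by
      rcases ha.lt_or_gt with h | h
      · rw [Real.sign_of_neg h]; exact hasDerivAt_abs_neg h
      · rw [Real.sign_of_pos h]; exact hasDerivAt_abs_pos h
    apply habs.congr_of_eventuallyEq
    have : {x : ℝ | ε < |x|} ∈ nhds a :=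
      IsOpen.mem_nhds (isOpen_lt continuous_const continuous_abs) hgt
    filter_upwards [this] with x hx
    simp [huberS, not_le.2 hx]

lemma huberMaj_hasDerivAt (ε : ℝ) (hε : 0 < ε) (a : ℝ) :
    HasDerivAt (fun x => huberMaj ε x a) (if |a| ≤ ε then a / ε else Real.sign a) a := by
  have h := quad_hasDerivAt (max |a| ε) a
  have : (if |a| ≤ ε then a / ε else Real.sign a) = a / max |a| ε := by
    split_ifs with hle
    · rw [max_eq_right hle]
    · rw [max_eq_left (le_of_lt (not_le.1 hle))]
      rcases lt_or_gt_of_ne (fun h0 : a = 0 => hle (by simp [h0, hε.le])) with h | h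
      · rw [Real.sign_of_neg h, abs_of_neg h, div_neg, div_self h.ne]
      · rw [Real.sign_of_pos h, abs_of_pos h]; field_simp
  rw [this]
  exact h

/-- **Claim (matching derivatives of the scaled Huber loss and its majorizer).**
For any `a ∈ ℝ` and `ε > 0`, `f_ε'(a) = ∂_x g_ε(x; a)|_{x = a}`, both being `a/ε` when
`|a| ≤ ε` and `sign(a)` when `|a| > ε`. Consequently, for any data and any model `w⁰`,
`∇℘_ε(w⁰; w⁰) = n ∇ℓ_ε(w⁰)`. -/
theorem huber_majorizer_derivative (ε : ℝ) (hε : 0 < ε) :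
    (∀ a : ℝ,
      HasDerivAt (huberS ε) (if |a| ≤ ε then a / ε else Real.sign a) a ∧
      HasDerivAt (fun x => huberMaj ε x a) (if |a| ≤ ε then a / ε else Real.sign a) a) ∧
    (∀ (d n : ℕ) (X : Matrix (Fin d) (Fin n) ℝ) (y : Fin n → ℝ) (w0 : Fin d → ℝ),
      fderiv ℝ (fun w : Fin d → ℝ =>
          ∑ i, huberMaj ε ((Xᵀ.mulVec w - y) i) ((Xᵀ.mulVec w0 - y) i)) w0 =
        (n : ℝ) • fderiv ℝ (fun w : Fin d → ℝ => huberObj X y ε w) w0) := by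
  refine ⟨fun a => ⟨huberS_hasDerivAt ε hε a, huberMaj_hasDerivAt ε hε a⟩, ?_⟩
  intro d n X y w0
  set a : Fin n → ℝ := fun i => (Xᵀ.mulVec w0 - y) i with ha
  set c : Fin n → ℝ := fun i => if |a i| ≤ ε then a i / ε else Real.sign (a i) with hc
  set L : Fin n → (Fin d → ℝ) →L[ℝ] ℝ := fun i =>
    LinearMap.toContinuousLinearMap ((LinearMap.proj i).comp (Matrix.mulVecLin Xᵀ)) with hL
  have hres : ∀ i, HasFDerivAt (fun w : Fin d → ℝ => (Xᵀ.mulVec w - y) i) (L i) w0 := by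
    intro i
    have := ((L i).hasFDerivAt (x := w0)).sub_const (y i)
    exact this
  have hg : ∀ i, HasFDerivAt
      (fun w : Fin d → ℝ => huberMaj ε ((Xᵀ.mulVec w - y) i) (a i)) (c i • L i) w0 :=
    fun i => by have := (huberMaj_hasDerivAt ε hε (a i)).comp_hasFDerivAt w0 (hres i); exact this
  have hf : ∀ i, HasFDerivAt
      (fun w : Fin d → ℝ => huberS ε ((Xᵀ.mulVec w - y) i)) (c i • L i) w0 :=
    fun i => by have := (huberS_hasDerivAt ε hε (a i)).comp_hasFDerivAt w0 (hres i); exact this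
  have hsum_g : HasFDerivAt
      (fun w : Fin d → ℝ => ∑ i, huberMaj ε ((Xᵀ.mulVec w - y) i) (a i))
      (∑ i, c i • L i) w0 := HasFDerivAt.fun_sum (fun i _ => hg i)
  have hsum_f : HasFDerivAt
      (fun w : Fin d → ℝ => ∑ i, huberS ε ((Xᵀ.mulVec w - y) i))
      (∑ i, c i • L i) w0 := HasFDerivAt.fun_sum (fun i _ => hf i)
  have hobj : HasFDerivAt (fun w : Fin d → ℝ => huberObj X y ε w)
      ((1 / (n : ℝ)) • ∑ i, c i • L i) w0 := by
    simpa [huberObj, smul_smul] using hsum_f.const_mul (1 / (n : ℝ))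
  rw [hsum_g.fderiv, hobj.fderiv]
  rcases Nat.eq_zero_or_pos n with hn | hn
  · subst hn
    simp
  · rw [smul_smul, mul_one_div, div_self (Nat.cast_ne_zero.2 hn.ne'), one_smul]
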